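/- Every finite chordal graph which is not complete admits at least two non-adjacent simplicial vertices. -/

import Mathlib

def SimpleGraph.IsSimplicialVertex {V : Type*} (G : SimpleGraph V) (v : V) : Prop :=
  G.IsClique (G.neighborSet v)

def SimpleGraph.IsChordal {V : Type*} (G : SimpleGraph V) : Prop :=
  ∀ (v : V) (w : G.Walk v v), w.IsCycle → 4 ≤ w.length →
    ∃ a b, a ∈ w.support ∧ b ∈ w.support ∧ G.Adj a b ∧ s(a, b) ∉ w.edges

def SimpleGraph.IsPEO {V : Type*} [Fintype V] (G : SimpleGraph V)
    (e : Fin (Fintype.card V) ≃ V) : Prop :=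
  ∀ i : Fin (Fintype.card V),
    (G.induce {x | ∃ j, i ≤ j ∧ e j = x}).IsSimplicialVertex ⟨e i, ⟨i, le_refl i, rfl⟩⟩

open SimpleGraph

namespace CP
variable {V : Type*} {G : SimpleGraph V}

lemma edge_of_length_one {u v : V} (m : G.Walk u v) (h : m.length = 1) : s(u,v) ∈ m.edges := by
  cases m with
  | nil => simp at h
  | @cons _ w _ hadj m' =>
    have h0 : m'.length = 0 := by simpa using h
    have hwv : w = v := m'.eq_of_length_eq_zero h0
    subst hwv
    simp

lemma exists_shorter [DecidableEq V] {x y u v : V} (p : G.Walk x y) (huv : G.Adj u v)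
    (hu : u ∈ p.support) (hv : v ∈ p.support) (he : s(u,v) ∉ p.edges) :
    ∃ p' : G.Walk x y, p'.length < p.length ∧ ∀ z ∈ p'.support, z ∈ p.support := by
  have hsplit := p.take_spec hu
  have hv' : v ∈ (p.takeUntil u hu).support ∨ v ∈ (p.dropUntil u hu).support := by
    rw [← Walk.mem_support_append_iff, hsplit]; exact hv
  set q := p.takeUntil u hu with hq
  set r := p.dropUntil u hu with hr
  have hlen : p.length = q.length + r.length := by
    conv_lhs => rw [← hsplit]
    rw [Walk.length_append]
  rcases hv' with hvq | hvr
  · refine ⟨(q.takeUntil v hvq).append (Walk.cons huv.symm r), ?_, ?_⟩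
    · have hqlen : q.length = (q.takeUntil v hvq).length + (q.dropUntil v hvq).length := by
        conv_lhs => rw [← q.take_spec hvq]
        rw [Walk.length_append]
      have h0 : (q.dropUntil v hvq).length ≠ 0 := fun h0 =>
        G.ne_of_adj huv.symm ((q.dropUntil v hvq).eq_of_length_eq_zero h0)
      have h1 : (q.dropUntil v hvq).length ≠ 1 := by
        intro h1
        have hm : s(v,u) ∈ (q.dropUntil v hvq).edges := edge_of_length_one _ h1
        have hm2 : s(v,u) ∈ p.edges :=
          (p.edges_takeUntil_subset hu) ((q.edges_dropUntil_subset hvq) hm)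
        rw [Sym2.eq_swap] at hm2
        exact he hm2
      rw [Walk.length_append, Walk.length_cons]
      omega
    · intro z hz
      rw [Walk.mem_support_append_iff] at hz
      rcases hz with hz | hz
      · exact p.support_takeUntil_subset hu (q.support_takeUntil_subset hvq hz)
      · rw [Walk.support_cons] at hz
        rcases List.mem_cons.mp hz with rfl | hz
        · exact hv
        · exact p.support_dropUntil_subset hu hz
  · refine ⟨q.append (Walk.cons huv (r.dropUntil v hvr)), ?_, ?_⟩
    · have hrlen : r.length = (r.takeUntil v hvr).length + (r.dropUntil v hvr).length := by
        conv_lhs => rw [← r.take_spec hvr]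
        rw [Walk.length_append]
      have h0 : (r.takeUntil v hvr).length ≠ 0 := fun h0 =>
        G.ne_of_adj huv ((r.takeUntil v hvr).eq_of_length_eq_zero h0)
      have h1 : (r.takeUntil v hvr).length ≠ 1 := by
        intro h1
        have hm : s(u,v) ∈ (r.takeUntil v hvr).edges := edge_of_length_one _ h1
        exact he ((p.edges_dropUntil_subset hu) ((r.edges_takeUntil_subset hvr) hm))
      rw [Walk.length_append, Walk.length_cons]
      omega
    · intro z hz
      rw [Walk.mem_support_append_iff] at hz
      rcases hz with hz | hz
      · exact p.support_takeUntil_subset hu hz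
      · rw [Walk.support_cons] at hz
        rcases List.mem_cons.mp hz with rfl | hz
        · exact hu
        · exact p.support_dropUntil_subset hu ((r.support_dropUntil_subset hvr) hz)

lemma isChordal_induce (hG : G.IsChordal) (s : Set V) : (G.induce s).IsChordal := by
  intro v w hw hlen
  let f : G.induce s →g G := ⟨Subtype.val, fun h => h⟩
  have hinj : Function.Injective f := Subtype.val_injective
  obtain ⟨a, b, ha, hb, hab, hne⟩ := hG v (w.map f) (hw.map hinj) (by rwa [Walk.length_map])
  rw [Walk.support_map] at ha hb
  obtain ⟨a', ha', rfl⟩ := List.mem_map.mp ha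
  obtain ⟨b', hb', rfl⟩ := List.mem_map.mp hb
  refine ⟨a', b', ha', hb', hab, fun h => hne ?_⟩
  rw [Walk.edges_map]
  have := List.mem_map_of_mem (f := Sym2.map f) h
  simpa using this

def RA (G : SimpleGraph V) (S : Set V) (u v : V) : Prop :=
  ∃ p : G.Walk u v, ∀ x ∈ p.support, x ∉ S

namespace RA

lemma refl {S : Set V} {u : V} (h : u ∉ S) : RA G S u u :=
  ⟨Walk.nil, by simpa using h⟩

lemma symm {S : Set V} {u v : V} (h : RA G S u v) : RA G S v u := by
  obtain ⟨p, hp⟩ := h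
  exact ⟨p.reverse, fun x hx => hp x (by simpa [Walk.support_reverse] using hx)⟩

lemma trans {S : Set V} {u v w : V} (h : RA G S u v) (h' : RA G S v w) : RA G S u w := by
  obtain ⟨p, hp⟩ := h; obtain ⟨q, hq⟩ := h'
  refine ⟨p.append q, fun x hx => ?_⟩
  rcases (Walk.mem_support_append_iff _ _).mp hx with h | h
  exacts [hp x h, hq x h]

lemma not_mem_left {S : Set V} {u v : V} (h : RA G S u v) : u ∉ S := by
  obtain ⟨p, hp⟩ := h; exact hp u p.start_mem_support

lemma not_mem_right {S : Set V} {u v : V} (h : RA G S u v) : v ∉ S := by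
  obtain ⟨p, hp⟩ := h; exact hp v p.end_mem_support

lemma adj {S : Set V} {u v w : V} (h : RA G S u v) (hadj : G.Adj v w) (hw : w ∉ S) :
    RA G S u w := by
  refine h.trans ⟨Walk.cons hadj Walk.nil, ?_⟩
  intro x hx
  rcases by simpa using hx with rfl | rfl
  exacts [h.not_mem_right, hw]

lemma mem_support {S : Set V} {a u v x : V} (hu : RA G S a u) (p : G.Walk u v)
    (hp : ∀ y ∈ p.support, y ∉ S) (hx : x ∈ p.support) : RA G S a x := by
  classical
  exact hu.trans ⟨p.takeUntil x hx, fun y hy => hp y (p.support_takeUntil_subset hx hy)⟩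

end RA

lemma sep_min_neighbor [DecidableEq V] {a b : V} {S : Finset V}
    (hSa : a ∉ S) (hSb : b ∉ S) (hSsep : ¬ RA G ↑S a b)
    (hmin : ∀ T : Finset V, (a ∉ T ∧ b ∉ T ∧ ¬ RA G ↑T a b) → S.card ≤ T.card)
    {s : V} (hs : s ∈ S) :
    ∃ u, RA G ↑S a u ∧ G.Adj u s := by
  by_contra hno
  push_neg at hno
  have hsep' : ¬ RA G ↑(S.erase s) a b := by
    rintro ⟨p, hp⟩
    by_cases hsp : s ∈ p.support
    · set q := p.takeUntil s hsp with hqdef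
      have hacount : q.support.count s = 1 := p.count_support_takeUntil_eq_one hsp
      have has : a ≠ s := fun h => hSa (h ▸ hs)
      obtain ⟨u, h', r, hqr⟩ := Walk.exists_eq_cons_of_ne (Ne.symm has) q.reverse
      have hsupp : q.support.reverse = s :: r.support := by
        rw [← Walk.support_reverse, hqr, Walk.support_cons]
      have hscount : (s :: r.support).count s = 1 := by
        rw [← hsupp, List.count_reverse, hacount]
      have hsr : s ∉ r.support := by
        have : r.support.count s = 0 := by simpa using hscount
        exact List.count_eq_zero.mp this
      have hrsub : ∀ x ∈ r.support, x ∈ q.support := by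
        intro x hx
        have : x ∈ q.support.reverse := by rw [hsupp]; exact List.mem_cons_of_mem _ hx
        simpa using this
      have hravoid : ∀ x ∈ r.support, x ∉ (S : Set V) := by
        intro x hx hxS
        have hxp : x ∈ p.support := p.support_takeUntil_subset hsp (hrsub x hx)
        have hxs : x ≠ s := fun h => hsr (h ▸ hx)
        exact hp x hxp (by simp [Finset.mem_erase, hxs, hxS])
      have hRA : RA G ↑S a u := by
        refine ⟨r.reverse, fun x hx => ?_⟩
        exact hravoid x (by simpa [Walk.support_reverse] using hx)
      exact hno u hRA h'.symm
    · refine hSsep ⟨p, fun x hx => ?_⟩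
      intro hxS
      have hxs : x ≠ s := fun h => hsp (h ▸ hx)
      exact hp x hx (by simp [Finset.mem_erase, hxs, hxS])
  have h1 := hmin (S.erase s) ⟨by simp [hSa], by simp [hSb], hsep'⟩
  have h2 : (S.erase s).card < S.card := Finset.card_erase_lt_of_mem hs
  omega

lemma exists_min_path {x y : V} (cond : V → Prop)
    (hne : ∃ p : G.Walk x y, ∀ v ∈ p.support, cond v) :
    ∃ p : G.Walk x y, (∀ v ∈ p.support, cond v) ∧ p.IsPath ∧
      ∀ q : G.Walk x y, (∀ v ∈ q.support, cond v) → p.length ≤ q.length := by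
  classical
  have hL : ∃ n : ℕ, ∃ p : G.Walk x y, p.length = n ∧ ∀ v ∈ p.support, cond v := by
    obtain ⟨p, hp⟩ := hne; exact ⟨p.length, p, rfl, hp⟩
  obtain ⟨p, hplen, hpcond⟩ := Nat.find_spec hL
  have hmin : ∀ q : G.Walk x y, (∀ v ∈ q.support, cond v) → Nat.find hL ≤ q.length :=
    fun q hq => Nat.find_min' hL ⟨q, rfl, hq⟩
  have hbcond : ∀ v ∈ p.bypass.support, cond v :=
    fun v hv => hpcond v (p.support_bypass_subset hv)
  have hblen : p.bypass.length = Nat.find hL :=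
    le_antisymm (hplen ▸ p.length_bypass_le) (hmin _ hbcond)
  exact ⟨p.bypass, hbcond, p.bypass_isPath, fun q hq => hblen ▸ hmin q hq⟩

lemma sep_clique (hG : G.IsChordal) {S : Set V} {a b : V}
    (hsep : ¬ RA G S a b)
    (hA : ∀ s ∈ S, ∃ u, RA G S a u ∧ G.Adj u s)
    (hB : ∀ s ∈ S, ∃ u, RA G S b u ∧ G.Adj u s) :
    ∀ x ∈ S, ∀ y ∈ S, x ≠ y → G.Adj x y := by
  classical
  intro x hx y hy hxy
  by_contra hnadj
  have hAB : ∀ v, RA G S a v → RA G S b v → False :=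
    fun v hva hvb => hsep (hva.trans hvb.symm)
  have hexA : ∃ p : G.Walk x y, ∀ v ∈ p.support, v = x ∨ v = y ∨ RA G S a v := by
    obtain ⟨u₁, hu₁, hu₁x⟩ := hA x hx
    obtain ⟨u₂, hu₂, hu₂y⟩ := hA y hy
    obtain ⟨w, hw⟩ := hu₁.symm.trans hu₂
    refine ⟨Walk.cons hu₁x.symm (w.concat hu₂y), ?_⟩
    intro v hv
    rw [Walk.support_cons] at hv
    rcases List.mem_cons.mp hv with rfl | hv
    · left; rfl
    rw [Walk.support_concat] at hv
    rcases by simpa using hv with hv | rfl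
    · right; right; exact RA.mem_support hu₁ w hw hv
    · right; left; rfl
  have hexB : ∃ p : G.Walk x y, ∀ v ∈ p.support, v = x ∨ v = y ∨ RA G S b v := by
    obtain ⟨u₁, hu₁, hu₁x⟩ := hB x hx
    obtain ⟨u₂, hu₂, hu₂y⟩ := hB y hy
    obtain ⟨w, hw⟩ := hu₁.symm.trans hu₂
    refine ⟨Walk.cons hu₁x.symm (w.concat hu₂y), ?_⟩
    intro v hv
    rw [Walk.support_cons] at hv
    rcases List.mem_cons.mp hv with rfl | hv
    · left; rfl
    rw [Walk.support_concat] at hv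
    rcases by simpa using hv with hv | rfl
    · right; right; exact RA.mem_support hu₁ w hw hv
    · right; left; rfl
  obtain ⟨p, hpcond, hppath, hpmin⟩ := exists_min_path _ hexA
  obtain ⟨q, hqcond, hqpath, hqmin⟩ := exists_min_path _ hexB
  have hpchord : ∀ u v, u ∈ p.support → v ∈ p.support → G.Adj u v → s(u,v) ∈ p.edges := by
    intro u v hu hv huv
    by_contra he
    obtain ⟨p', hlt, hsub⟩ := exists_shorter p huv hu hv he
    exact absurd (hpmin p' fun z hz => hpcond z (hsub z hz)) (by omega)
  have hqchord : ∀ u v, u ∈ q.support → v ∈ q.support → G.Adj u v → s(u,v) ∈ q.edges := by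
    intro u v hu hv huv
    by_contra he
    obtain ⟨q', hlt, hsub⟩ := exists_shorter q huv hu hv he
    exact absurd (hqmin q' fun z hz => hqcond z (hsub z hz)) (by omega)
  have hlen2 : ∀ (w : G.Walk x y), 2 ≤ w.length := by
    intro w
    by_contra hcon
    push_neg at hcon
    have h01 : w.length = 0 ∨ w.length = 1 := by omega
    rcases h01 with h0 | h1
    · exact hxy (w.eq_of_length_eq_zero h0)
    · exact hnadj (w.adj_of_mem_edges (edge_of_length_one w h1))
  have hp2 := hlen2 p
  have hq2 := hlen2 q
  have hsuppmem : ∀ v, v ∈ p.support → v ∈ q.support → v = x ∨ v = y := by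
    intro v hvp hvq
    rcases hpcond v hvp with rfl | rfl | hva
    · left; rfl
    · right; rfl
    rcases hqcond v hvq with rfl | rfl | hvb
    · left; rfl
    · right; rfl
    exact (hAB v hva hvb).elim
  have hedisj : ∀ e ∈ p.edges, e ∉ q.edges := by
    intro e
    induction e using Sym2.ind with
    | _ c d =>
      intro hep heq
      have hcd : G.Adj c d := p.adj_of_mem_edges hep
      rcases hsuppmem c (p.fst_mem_support_of_mem_edges hep)
          (q.fst_mem_support_of_mem_edges heq) with rfl | rfl <;>
        rcases hsuppmem d (p.snd_mem_support_of_mem_edges hep)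
          (q.snd_mem_support_of_mem_edges heq) with rfl | rfl
      · exact hcd.ne rfl
      · exact hnadj hcd
      · exact hnadj hcd.symm
      · exact hcd.ne rfl
  set c := p.append q.reverse with hc
  have hcedges : c.edges = p.edges ++ q.edges.reverse := by
    rw [hc, Walk.edges_append, Walk.edges_reverse]
  have hclen : c.length = p.length + q.length := by
    rw [hc, Walk.length_append, Walk.length_reverse]
  have hctrail : c.IsTrail := by
    rw [Walk.isTrail_def, hcedges, List.nodup_append]
    refine ⟨hppath.isTrail.edges_nodup, List.nodup_reverse.mpr hqpath.isTrail.edges_nodup, ?_⟩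
    intro e hep e' heq hee
    subst hee
    exact hedisj e hep (List.mem_reverse.mp heq)
  obtain ⟨tp, htp⟩ : ∃ t, p.support = x :: t := ⟨_, p.support_eq_cons⟩
  obtain ⟨tq, htq⟩ : ∃ t, q.reverse.support = y :: t := ⟨_, q.reverse.support_eq_cons⟩
  have hcnodup : c.support.tail.Nodup := by
    rw [hc, Walk.tail_support_append, List.nodup_append]
    have hpn := hppath.support_nodup
    have hqn := hqpath.reverse.support_nodup
    rw [htp, List.nodup_cons] at hpn
    rw [htq, List.nodup_cons] at hqn
    have htp' : p.support.tail = tp := by rw [htp]; rfl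
    have htq' : q.reverse.support.tail = tq := by rw [htq]; rfl
    rw [htp', htq']
    refine ⟨hpn.2, hqn.2, ?_⟩
    intro v hvp v' hvq hvv
    subst hvv
    have hvx : v ≠ x := fun h => hpn.1 (h ▸ hvp)
    have hvy : v ≠ y := fun h => hqn.1 (h ▸ hvq)
    have hvps : v ∈ p.support := by rw [htp]; exact List.mem_cons_of_mem _ hvp
    have hvqs : v ∈ q.support := by
      have hm : v ∈ q.reverse.support := by rw [htq]; exact List.mem_cons_of_mem _ hvq
      rw [Walk.support_reverse] at hm; exact List.mem_reverse.mp hm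
    rcases hsuppmem v hvps hvqs with rfl | rfl
    · exact hvx rfl
    · exact hvy rfl
  have hccyc : c.IsCycle := by
    rw [Walk.isCycle_def]
    refine ⟨hctrail, ?_, hcnodup⟩
    intro h
    have h0 : c.length = 0 := by rw [h]; rfl
    omega
  obtain ⟨u, v, hu, hv, huv, hne⟩ := hG x c hccyc (by omega)
  have hcsupp : ∀ z, z ∈ c.support → z ∈ p.support ∨ z ∈ q.support := by
    intro z hz
    rw [hc, Walk.mem_support_append_iff] at hz
    rcases hz with hz | hz
    · left; exact hz
    · right; rw [Walk.support_reverse] at hz; exact List.mem_reverse.mp hz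
  have hnep : s(u,v) ∉ p.edges := fun h => hne (by rw [hcedges]; exact List.mem_append_left _ h)
  have hneq : s(u,v) ∉ q.edges := fun h =>
    hne (by rw [hcedges]; exact List.mem_append_right _ (List.mem_reverse.mpr h))
  have hpcase : u ∈ p.support → v ∈ p.support → False :=
    fun h1 h2 => hnep (hpchord u v h1 h2 huv)
  have hqcase : u ∈ q.support → v ∈ q.support → False :=
    fun h1 h2 => hneq (hqchord u v h1 h2 huv)
  have hABadj : ∀ z w, RA G S a z → RA G S b w → G.Adj z w → False := by
    intro z w hz hw hzw
    exact hAB w (hz.adj hzw hw.not_mem_right) hw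
  rcases hcsupp u hu with hup | huq <;> rcases hcsupp v hv with hvp | hvq
  · exact hpcase hup hvp
  · rcases hpcond u hup with rfl | rfl | hua
    · exact hqcase q.start_mem_support hvq
    · exact hqcase q.end_mem_support hvq
    · rcases hqcond v hvq with rfl | rfl | hvb
      · exact hpcase hup p.start_mem_support
      · exact hpcase hup p.end_mem_support
      · exact hABadj u v hua hvb huv
  · rcases hpcond v hvp with rfl | rfl | hva
    · exact hqcase huq q.start_mem_support
    · exact hqcase huq q.end_mem_support
    · rcases hqcond u huq with rfl | rfl | hub
      · exact hpcase p.start_mem_support hvp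
      · exact hpcase p.end_mem_support hvp
      · exact hABadj v u hva hub huv.symm
  · exact hqcase huq hvq


universe u

lemma side_lemma {V : Type u} [Fintype V] {G : SimpleGraph V} {n : ℕ} {S : Set V} {c d : V}
    (IH : ∀ {W : Type u} [Fintype W] (H : SimpleGraph W), Fintype.card W ≤ n → H.IsChordal →
      (∀ x y : W, x ≠ y → H.Adj x y) ∨
        ∃ x y : W, x ≠ y ∧ ¬H.Adj x y ∧ H.IsSimplicialVertex x ∧ H.IsSimplicialVertex y)
    (hG : G.IsChordal) (hcard : Fintype.card V ≤ n + 1)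
    (hclq : ∀ x ∈ S, ∀ y ∈ S, x ≠ y → G.Adj x y)
    (hc : c ∉ S) (hd : d ∉ S) (hcd : ¬ RA G S c d) :
    ∃ u₀, RA G S c u₀ ∧ G.IsSimplicialVertex u₀ := by
  classical
  set T : Set V := {v | RA G S c v} ∪ S with hT
  have hdT : d ∉ T := by
    intro h
    rw [hT, Set.mem_union] at h
    rcases h with h | h
    · exact hcd h
    · exact hd h
  have hclose : ∀ u, RA G S c u → ∀ v, G.Adj u v → v ∈ T := by
    intro u hu v huv
    by_cases hvS : v ∈ S
    · exact Or.inr hvS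
    · exact Or.inl (hu.adj huv hvS)
  have hcardT : Fintype.card T ≤ n := by
    have h1 : Fintype.card T < Fintype.card V :=
      Fintype.card_lt_of_injective_of_notMem (fun x : T => (x : V)) Subtype.val_injective
        (b := d) (by simpa using hdT)
    omega
  rcases IH (G.induce T) hcardT (isChordal_induce hG T) with hcomp | ⟨x, y, hxyne, hnadj, hsx, hsy⟩
  · refine ⟨c, RA.refl hc, ?_⟩
    intro z hz w hw hzw
    have hzT : z ∈ T := hclose c (RA.refl hc) z hz
    have hwT : w ∈ T := hclose c (RA.refl hc) w hw
    exact hcomp ⟨z, hzT⟩ ⟨w, hwT⟩ (fun h => hzw (congrArg Subtype.val h))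
  · have hlift : ∀ w : T, RA G S c ↑w → (G.induce T).IsSimplicialVertex w →
        G.IsSimplicialVertex ↑w := by
      intro w hwA hws
      intro z hz z' hz' hne
      have hzT : z ∈ T := hclose _ hwA z hz
      have hz'T : z' ∈ T := hclose _ hwA z' hz'
      have h1 : (⟨z, hzT⟩ : T) ∈ (G.induce T).neighborSet w := hz
      have h2 : (⟨z', hz'T⟩ : T) ∈ (G.induce T).neighborSet w := hz'
      exact hws h1 h2 (fun h => hne (congrArg Subtype.val h))
    rcases (Set.mem_union _ _ _).mp x.2 with hxA | hxS
    · exact ⟨↑x, hxA, hlift x hxA hsx⟩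
    · rcases (Set.mem_union _ _ _).mp y.2 with hyA | hyS
      · exact ⟨↑y, hyA, hlift y hyA hsy⟩
      · exact absurd (hclq ↑x hxS ↑y hyS (fun h => hxyne (Subtype.ext h))) hnadj

lemma main (n : ℕ) : ∀ {V : Type u} [Fintype V] (G : SimpleGraph V), Fintype.card V ≤ n →
    G.IsChordal →
    (∀ x y : V, x ≠ y → G.Adj x y) ∨
      ∃ x y : V, x ≠ y ∧ ¬G.Adj x y ∧ G.IsSimplicialVertex x ∧ G.IsSimplicialVertex y := by
  induction n with
  | zero =>
    intro V _ G hcard _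
    left
    intro x y hxy
    exact absurd (Fintype.card_pos_iff.mpr ⟨x⟩) (by omega)
  | succ n ih =>
    intro V _ G hcard hG
    by_cases hco : ∀ x y : V, x ≠ y → G.Adj x y
    · exact Or.inl hco
    right
    push_neg at hco
    obtain ⟨a, b, hne, hnadj⟩ := hco
    classical
    have hex : ∃ S : Finset V, a ∉ S ∧ b ∉ S ∧ ¬ RA G ↑S a b := by
      refine ⟨Finset.univ \ {a, b}, by simp, by simp, ?_⟩
      rintro ⟨p, hp⟩
      cases p with
      | nil => exact hne rfl
      | @cons _ w _ h q =>
        have hw := hp w (by rw [Walk.support_cons]; exact List.mem_cons_of_mem _ q.start_mem_support)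
        have hw' : w = a ∨ w = b := by
          by_contra hcon
          push_neg at hcon
          exact hw (by simp [hcon.1, hcon.2])
        rcases hw' with rfl | rfl
        · exact h.ne rfl
        · exact hnadj h
    have hnonempty : (Finset.univ.filter
        (fun S : Finset V => a ∉ S ∧ b ∉ S ∧ ¬ RA G ↑S a b)).Nonempty := by
      obtain ⟨S, hS⟩ := hex
      exact ⟨S, Finset.mem_filter.mpr ⟨Finset.mem_univ _, hS⟩⟩
    obtain ⟨S, hSmem, hSmin⟩ := Finset.exists_min_image _ Finset.card hnonempty
    rw [Finset.mem_filter] at hSmem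
    obtain ⟨-, hSa, hSb, hSsep⟩ := hSmem
    have hmin : ∀ T : Finset V, (a ∉ T ∧ b ∉ T ∧ ¬ RA G ↑T a b) → S.card ≤ T.card := by
      intro T hT
      exact hSmin T (Finset.mem_filter.mpr ⟨Finset.mem_univ _, hT⟩)
    have hSsep' : ¬ RA G ↑S b a := fun h => hSsep h.symm
    have hmin' : ∀ T : Finset V, (b ∉ T ∧ a ∉ T ∧ ¬ RA G ↑T b a) → S.card ≤ T.card := by
      rintro T ⟨h1, h2, h3⟩
      exact hmin T ⟨h2, h1, fun h => h3 h.symm⟩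
    have hA : ∀ s ∈ (↑S : Set V), ∃ u, RA G ↑S a u ∧ G.Adj u s :=
      fun s hs => sep_min_neighbor hSa hSb hSsep hmin (Finset.mem_coe.mp hs)
    have hB : ∀ s ∈ (↑S : Set V), ∃ u, RA G ↑S b u ∧ G.Adj u s :=
      fun s hs => sep_min_neighbor hSb hSa hSsep' hmin' (Finset.mem_coe.mp hs)
    have hclq := sep_clique hG hSsep hA hB
    obtain ⟨u₀, hu₀, hsimpu⟩ :=
      side_lemma (fun {W} _ H h1 h2 => ih H h1 h2) hG hcard hclq
        (by simpa using hSa) (by simpa using hSb) hSsep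
    obtain ⟨v₀, hv₀, hsimpv⟩ :=
      side_lemma (fun {W} _ H h1 h2 => ih H h1 h2) hG hcard hclq
        (by simpa using hSb) (by simpa using hSa) hSsep'
    refine ⟨u₀, v₀, ?_, ?_, hsimpu, hsimpv⟩
    · rintro rfl
      exact hSsep (hu₀.trans hv₀.symm)
    · intro hadj
      exact hSsep ((hu₀.adj hadj hv₀.not_mem_right).trans hv₀.symm)

end CP

theorem chordal_two_nonadjacent_simplicial {V : Type*} [Fintype V] (G : SimpleGraph V)
    (hG : G.IsChordal) (hnc : ¬ ∀ u v : V, u ≠ v → G.Adj u v) :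
    ∃ u v : V, u ≠ v ∧ ¬ G.Adj u v ∧ G.IsSimplicialVertex u ∧ G.IsSimplicialVertex v := by
  rcases CP.main (Fintype.card V) G le_rfl hG with h | h
  · exact absurd h hnc
  · exact h
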